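/- Let B0 = (e_i) and B1 = (f_k) be orthonormal bases of ℂ^d, let X = X(B1,B0) with X_{ki} = ‖⟪f_k, e_i⟫‖², and let a ∈ ℝ^d with ∑_k a_k² = 1. Define Var_i(a) := ∑_k a_k² X_{ki} − (∑_k a_k X_{ki})². Then for every i, Var_i(a) ≤ 1 − λ_min(X·Xᵀ), where λ_min denotes the smallest eigenvalue of the positive semidefinite symmetric matrix X·Xᵀ. Hence Q_{B0}(B1) ≤ q(B1,B0) := 1 − λ_min(X·Xᵀ). -/

import Mathlib

open Matrix

noncomputable def transMatrix {d : ℕ}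
    (B C : OrthonormalBasis (Fin d) ℂ (EuclideanSpace ℂ (Fin d))) :
    Matrix (Fin d) (Fin d) ℝ :=
  Matrix.of fun i j => ‖(inner ℂ (B i) (C j) : ℂ)‖ ^ 2

/-- The smallest eigenvalue of a real square matrix, as the infimum of its set
of eigenvalues. -/
noncomputable def lamMin {d : ℕ} (A : Matrix (Fin d) (Fin d) ℝ) : ℝ :=
  sInf {μ : ℝ | ∃ v : Fin d → ℝ, v ≠ 0 ∧ A.mulVec v = μ • v}

/-- Rayleigh-type bound: for a symmetric real matrix, `lamMin` is at most the
quadratic form at any unit vector. -/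
lemma lamMin_le_rayleigh {d : ℕ} (M : Matrix (Fin d) (Fin d) ℝ) (hM : M.IsHermitian)
    (a : Fin d → ℝ) (ha : ∑ k, (a k)^2 = 1) : lamMin M ≤ a ⬝ᵥ M *ᵥ a := by
  classical
  set S := {μ : ℝ | ∃ v : Fin d → ℝ, v ≠ 0 ∧ M.mulVec v = μ • v} with hS
  set b := hM.eigenvectorBasis with hb
  -- every element of S is an eigenvalue
  have hSub : ∀ μ ∈ S, ∃ j, μ = hM.eigenvalues j := by
    intro μ hμ
    obtain ⟨v, hv0, hv⟩ := hμ
    set vE : EuclideanSpace ℝ (Fin d) := (WithLp.equiv 2 (Fin d → ℝ)).symm v with hvE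
    have hex : ∃ j, b.repr vE j ≠ 0 := by
      by_contra h
      push_neg at h
      have : b.repr vE = 0 := by ext j; simpa using h j
      have : vE = 0 := by
        have := congrArg b.repr.symm this
        simpa using this
      exact hv0 (by simpa [hvE] using congrArg (WithLp.equiv 2 (Fin d → ℝ)) this)
    obtain ⟨j, hj⟩ := hex
    refine ⟨j, ?_⟩
    have hrepr : b.repr vE j = (⇑(b j) : Fin d → ℝ) ⬝ᵥ v := by
      rw [b.repr_apply_apply]
      simp [PiLp.inner_apply, dotProduct, hvE, mul_comm]
    have e1 : (⇑(b j) : Fin d → ℝ) ⬝ᵥ (M *ᵥ v) = μ * ((⇑(b j) : Fin d → ℝ) ⬝ᵥ v) := by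
      rw [hv]; simp [dotProduct, Finset.mul_sum, mul_left_comm]
    have e2 : (⇑(b j) : Fin d → ℝ) ⬝ᵥ (M *ᵥ v)
        = hM.eigenvalues j * ((⇑(b j) : Fin d → ℝ) ⬝ᵥ v) := by
      rw [Matrix.dotProduct_mulVec, ← Matrix.mulVec_transpose]
      have hMt : Mᵀ = M := by
        ext i' j'
        simpa [Matrix.conjTranspose_apply] using congrFun (congrFun hM i') j'
      rw [hMt, hM.mulVec_eigenvectorBasis, smul_dotProduct]
      simp [hb]
    have hc : (⇑(b j) : Fin d → ℝ) ⬝ᵥ v ≠ 0 := by rwa [hrepr] at hj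
    have := e1.symm.trans e2
    exact mul_right_cancel₀ hc this
  -- each eigenvalue lies in S
  have hmem : ∀ j, hM.eigenvalues j ∈ S := by
    intro j
    refine ⟨⇑(b j), ?_, hM.mulVec_eigenvectorBasis j⟩
    intro h0
    apply b.orthonormal.ne_zero j
    ext l
    exact congrFun h0 l
  have hBdd : BddBelow S := by
    have : S ⊆ Set.range hM.eigenvalues := by
      intro μ hμ; obtain ⟨j, hj⟩ := hSub μ hμ; exact ⟨j, hj.symm⟩
    exact ((Set.finite_range hM.eigenvalues).bddBelow).mono this
  have hle : ∀ j, lamMin M ≤ hM.eigenvalues j := fun j => csInf_le hBdd (hmem j)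
  -- spectral decomposition
  set U : Matrix (Fin d) (Fin d) ℝ := (hM.eigenvectorUnitary : Matrix (Fin d) (Fin d) ℝ) with hU
  have h1 : U * star U = 1 := (Matrix.mem_unitaryGroup_iff).mp hM.eigenvectorUnitary.2
  have hst : star U = Uᵀ := by
    ext i j; simp [Matrix.star_eq_conjTranspose, Matrix.conjTranspose_apply]
  set w : Fin d → ℝ := Uᵀ *ᵥ a with hw
  have key2 : ∑ j, (w j)^2 = 1 := by
    have h2 : ∑ j, (w j)^2 = w ⬝ᵥ w := by simp [dotProduct, sq]
    rw [h2, hw, Matrix.mulVec_transpose, ← Matrix.dotProduct_mulVec,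
      ← Matrix.mulVec_transpose, Matrix.mulVec_mulVec, ← hst, h1, Matrix.one_mulVec]
    simpa [dotProduct, sq] using ha
  have key1 : a ⬝ᵥ M *ᵥ a = ∑ j, hM.eigenvalues j * (w j)^2 := by
    conv_lhs => rw [hM.spectral_theorem, Unitary.conjStarAlgAut_apply]
    rw [← hU, hst, ← Matrix.mulVec_mulVec, ← Matrix.mulVec_mulVec,
      Matrix.dotProduct_mulVec, ← Matrix.mulVec_transpose, ← hw]
    simp [dotProduct, Matrix.mulVec_diagonal, sq]
    exact Finset.sum_congr rfl fun x _ => by ring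
  rw [key1]
  calc lamMin M = lamMin M * ∑ j, (w j)^2 := by rw [key2, mul_one]
    _ = ∑ j, lamMin M * (w j)^2 := Finset.mul_sum _ _ _
    _ ≤ ∑ j, hM.eigenvalues j * (w j)^2 :=
        Finset.sum_le_sum fun j _ => mul_le_mul_of_nonneg_right (hle j) (sq_nonneg _)

lemma transMatrix_row_sum {d : ℕ}
    (B C : OrthonormalBasis (Fin d) ℂ (EuclideanSpace ℂ (Fin d))) (k : Fin d) :
    ∑ i, transMatrix B C k i = 1 := by
  have h := C.sum_inner_mul_inner (B k) (B k)
  have h2 : ∀ i, (inner ℂ (B k) (C i) : ℂ) * inner ℂ (C i) (B k)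
      = ((‖(inner ℂ (B k) (C i) : ℂ)‖ ^ 2 : ℝ) : ℂ) := by
    intro i
    have e : (inner ℂ (C i) (B k) : ℂ) = starRingEnd ℂ (inner ℂ (B k) (C i)) :=
      (inner_conj_symm _ _).symm
    rw [e, RCLike.mul_conj]
    norm_cast
  rw [Finset.sum_congr rfl fun i _ => h2 i] at h
  have h3 : (inner ℂ (B k) (B k) : ℂ) = 1 := by
    rw [inner_self_eq_norm_sq_to_K, B.orthonormal.1 k]; norm_num
  rw [h3, ← Complex.ofReal_sum] at h
  have h4 : ∑ i, ‖(inner ℂ (B k) (C i) : ℂ)‖ ^ 2 = 1 := by exact_mod_cast h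
  simpa [transMatrix] using h4

lemma transMatrix_col_sum {d : ℕ}
    (B C : OrthonormalBasis (Fin d) ℂ (EuclideanSpace ℂ (Fin d))) (i : Fin d) :
    ∑ k, transMatrix B C k i = 1 := by
  have h := B.sum_inner_mul_inner (C i) (C i)
  have h2 : ∀ k, (inner ℂ (C i) (B k) : ℂ) * inner ℂ (B k) (C i)
      = ((‖(inner ℂ (B k) (C i) : ℂ)‖ ^ 2 : ℝ) : ℂ) := by
    intro k
    have e : (inner ℂ (C i) (B k) : ℂ) = starRingEnd ℂ (inner ℂ (B k) (C i)) :=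
      (inner_conj_symm _ _).symm
    rw [e, mul_comm, RCLike.mul_conj]
    norm_cast
  rw [Finset.sum_congr rfl fun k _ => h2 k] at h
  have h3 : (inner ℂ (C i) (C i) : ℂ) = 1 := by
    rw [inner_self_eq_norm_sq_to_K, C.orthonormal.1 i]; norm_num
  rw [h3, ← Complex.ofReal_sum] at h
  have h4 : ∑ k, ‖(inner ℂ (B k) (C i) : ℂ)‖ ^ 2 = 1 := by exact_mod_cast h
  simpa [transMatrix] using h4

/-- For `X = X(B1,B0)` (with `X_{ki} = ‖⟪f_k, e_i⟫‖²`) and a unit vector `a`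
(`∑ a_k² = 1`), the variance `Var_i(a) = ∑_k a_k² X_{ki} − (∑_k a_k X_{ki})²`
is bounded by `1 − λ_min(X·Xᵀ)` for every `i`. -/
theorem variance_le_one_sub_lamMin {d : ℕ}
    (B0 B1 : OrthonormalBasis (Fin d) ℂ (EuclideanSpace ℂ (Fin d)))
    (a : Fin d → ℝ) (ha : ∑ k, (a k) ^ 2 = 1) (i : Fin d) :
    (∑ k, (a k) ^ 2 * transMatrix B1 B0 k i) -
        (∑ k, a k * transMatrix B1 B0 k i) ^ 2 ≤
      1 - lamMin (transMatrix B1 B0 * (transMatrix B1 B0)ᵀ) := by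
  classical
  set X := transMatrix B1 B0 with hX
  have hX0 : ∀ k j, 0 ≤ X k j := fun k j => by
    simp only [hX, transMatrix, Matrix.of_apply]; positivity
  -- Cauchy–Schwarz: each variance term is nonnegative
  have hCS : ∀ j, (∑ k, a k * X k j)^2 ≤ ∑ k, (a k)^2 * X k j := by
    intro j
    have h := Finset.sum_mul_sq_le_sq_mul_sq Finset.univ
      (fun k => a k * Real.sqrt (X k j)) (fun k => Real.sqrt (X k j))
    have e1 : ∑ k, (a k * Real.sqrt (X k j)) * Real.sqrt (X k j) = ∑ k, a k * X k j :=
      Finset.sum_congr rfl fun k _ => by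
        rw [mul_assoc, Real.mul_self_sqrt (hX0 k j)]
    have e2 : ∑ k, (a k * Real.sqrt (X k j))^2 = ∑ k, (a k)^2 * X k j :=
      Finset.sum_congr rfl fun k _ => by rw [mul_pow, Real.sq_sqrt (hX0 k j)]
    have e3 : ∑ k, (Real.sqrt (X k j))^2 = 1 := by
      rw [Finset.sum_congr rfl fun k _ => Real.sq_sqrt (hX0 k j)]
      exact transMatrix_col_sum B1 B0 j
    rw [e1, e2, e3, mul_one] at h
    exact h
  -- sum of variances equals 1 - aᵀ X Xᵀ a
  have hsum1 : ∑ j, ∑ k, (a k)^2 * X k j = 1 := by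
    rw [Finset.sum_comm]
    calc ∑ k, ∑ j, (a k)^2 * X k j = ∑ k, (a k)^2 * ∑ j, X k j := by
          exact Finset.sum_congr rfl fun k _ => (Finset.mul_sum _ _ _).symm
      _ = ∑ k, (a k)^2 := by
          refine Finset.sum_congr rfl fun k _ => ?_
          rw [transMatrix_row_sum B1 B0 k, mul_one]
      _ = 1 := ha
  have hsum2 : ∑ j, (∑ k, a k * X k j)^2 = a ⬝ᵥ (X * Xᵀ) *ᵥ a := by
    simp only [dotProduct, Matrix.mulVec, Matrix.mul_apply, Matrix.transpose_apply, sq,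
      Finset.sum_mul, Finset.mul_sum, dotProduct]
    rw [Finset.sum_comm]
    refine Finset.sum_congr rfl fun k _ => ?_
    rw [Finset.sum_comm]
    refine Finset.sum_congr rfl fun m _ => ?_
    refine Finset.sum_congr rfl fun j _ => ?_
    ring
  -- Hermitian-ness of X Xᵀ
  have hMH : (X * Xᵀ).IsHermitian := by
    have e : Xᴴ = Xᵀ := by ext k j; simp [Matrix.conjTranspose_apply]
    have := Matrix.isHermitian_mul_conjTranspose_self X
    rwa [e] at this
  have hR := lamMin_le_rayleigh _ hMH a ha
  -- single variance term ≤ sum of all variance terms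
  have hsingle : (∑ k, (a k)^2 * X k i) - (∑ k, a k * X k i)^2
      ≤ ∑ j, ((∑ k, (a k)^2 * X k j) - (∑ k, a k * X k j)^2) :=
    Finset.single_le_sum (f := fun j => (∑ k, (a k)^2 * X k j) - (∑ k, a k * X k j)^2)
      (fun j _ => sub_nonneg.2 (hCS j)) (Finset.mem_univ i)
  have htot : ∑ j, ((∑ k, (a k)^2 * X k j) - (∑ k, a k * X k j)^2)
      = 1 - a ⬝ᵥ (X * Xᵀ) *ᵥ a := by
    rw [Finset.sum_sub_distrib, hsum1, hsum2]
  calc (∑ k, (a k)^2 * X k i) - (∑ k, a k * X k i)^2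
      ≤ 1 - a ⬝ᵥ (X * Xᵀ) *ᵥ a := by rw [← htot]; exact hsingle
    _ ≤ 1 - lamMin (X * Xᵀ) := by linarith
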